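/- For every odd positive integer m = 2k+1 and integer n, the number of partitions of n into distinct parts whose smallest missing odd positive integer equals m is the number of pairs (μ, ν) with |μ| + |ν| = n − k^2, where μ is a partition into distinct even parts and ν is a partition into distinct odd parts each greater than 2k+1. -/

import Mathlib

open Finset

/-- The set of partitions of `n` into distinct parts, encoded as finsets of
positive integers summing to `n`. -/
def Dpart (n : ℕ) : Finset (Finset ℕ) :=
  (Finset.Icc 1 n).powerset.filter (fun S => S.sum id = n)

/-- The minimal odd excludant: the least odd positive integer not occurring as a part. -/
noncomputable def pmoex (S : Finset ℕ) : ℕ := sInf {m : ℕ | Odd m ∧ m ∉ S}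

/-- The set {1, 3, ..., 2k-1}. -/
def Ofin (k : ℕ) : Finset ℕ := (Finset.range k).image (fun j => 2*j+1)

lemma mem_Ofin {k x : ℕ} : x ∈ Ofin k ↔ Odd x ∧ x < 2*k+1 := by
  simp only [Ofin, mem_image, mem_range, Nat.odd_iff]
  constructor
  · rintro ⟨j, hj, rfl⟩; omega
  · rintro ⟨h1, h2⟩; exact ⟨x/2, by omega, by omega⟩

lemma sum_Ofin (k : ℕ) : (Ofin k).sum id = k^2 := by
  rw [Ofin, Finset.sum_image (by intros a _ b _ h; simp only at h; omega)]
  induction k with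
  | zero => simp
  | succ k ih => rw [Finset.sum_range_succ, ih]; simp only [id_eq]; ring

lemma pmoex_eq {S : Finset ℕ} {k : ℕ} :
    pmoex S = 2*k+1 ↔ (2*k+1) ∉ S ∧ ∀ b, Odd b → b < 2*k+1 → b ∈ S := by
  constructor
  · intro h
    have hne : {m : ℕ | Odd m ∧ m ∉ S}.Nonempty := by
      by_contra hc
      rw [Set.not_nonempty_iff_eq_empty] at hc
      simp [pmoex, hc] at h
    have hmem := Nat.sInf_mem hne
    rw [show sInf {m : ℕ | Odd m ∧ m ∉ S} = pmoex S from rfl, h] at hmem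
    refine ⟨hmem.2, fun b hb hlt => ?_⟩
    by_contra hbS
    have : pmoex S ≤ b := Nat.sInf_le ⟨hb, hbS⟩
    omega
  · rintro ⟨h1, h2⟩
    have hmem : (2*k+1) ∈ {m : ℕ | Odd m ∧ m ∉ S} := ⟨⟨k, by ring⟩, h1⟩
    refine le_antisymm (Nat.sInf_le hmem) ?_
    by_contra hc
    push_neg at hc
    have hm := Nat.sInf_mem ⟨_, hmem⟩
    exact hm.2 (h2 _ hm.1 hc)


/-- The number of distinct-parts partitions of `n` with smallest missing odd part equal
to `2k+1` equals the number of pairs `(μ, ν)` with `|μ| + |ν| = n − k²`, where `μ` is a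
partition into distinct even parts and `ν` a partition into distinct odd parts each
greater than `2k+1`. -/
theorem stmt_16 (k n : ℕ) :
    ((Dpart n).filter (fun S => pmoex S = 2 * k + 1)).card =
      (((Finset.Icc 1 n).powerset ×ˢ (Finset.Icc 1 n).powerset).filter
        (fun p => (∀ x ∈ p.1, Even x) ∧ (∀ x ∈ p.2, Odd x ∧ 2 * k + 1 < x) ∧
          ((p.1.sum id + p.2.sum id : ℕ) : ℤ) = (n : ℤ) - (k : ℤ) ^ 2)).card := by
  classical
  apply Finset.card_bij'
    (fun S _ => (S.filter (fun x => Even x), S.filter (fun x => Odd x ∧ 2*k+1 < x)))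
    (fun p _ => p.1 ∪ p.2 ∪ Ofin k)
  · -- forward maps into target
    intro S hS
    simp only [Dpart, mem_filter, mem_powerset] at hS
    obtain ⟨⟨hsub, hsum⟩, hmo⟩ := hS
    rw [pmoex_eq] at hmo
    obtain ⟨hnot, hall⟩ := hmo
    have hO : Ofin k ⊆ S := fun x hx => by
      rw [mem_Ofin] at hx; exact hall x hx.1 hx.2
    have hdecomp : S = (S.filter (fun x => Even x)) ∪ (S.filter (fun x => Odd x ∧ 2*k+1 < x)) ∪ Ofin k := by
      ext x
      simp only [mem_union, mem_filter, mem_Ofin, Nat.even_iff, Nat.odd_iff]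
      constructor
      · intro hx
        have hne : x ≠ 2*k+1 := fun h => hnot (h ▸ hx)
        rcases Nat.even_or_odd x with he | ho
        · exact Or.inl (Or.inl ⟨hx, Nat.even_iff.mp he⟩)
        · rcases lt_or_gt_of_ne hne with h | h
          · exact Or.inr ⟨Nat.odd_iff.mp ho, h⟩
          · exact Or.inl (Or.inr ⟨hx, Nat.odd_iff.mp ho, h⟩)
      · rintro ((⟨h, _⟩ | ⟨h, _⟩) | ⟨h1, h2⟩)
        · exact h
        · exact h
        · exact hO (mem_Ofin.mpr ⟨Nat.odd_iff.mpr h1, h2⟩)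
    have hd1 : Disjoint (S.filter (fun x => Even x)) (S.filter (fun x => Odd x ∧ 2*k+1 < x)) := by
      rw [Finset.disjoint_left]
      intro a ha hb
      simp only [mem_filter, Nat.even_iff, Nat.odd_iff] at ha hb
      omega
    have hd2 : Disjoint ((S.filter (fun x => Even x)) ∪ (S.filter (fun x => Odd x ∧ 2*k+1 < x))) (Ofin k) := by
      rw [Finset.disjoint_left]
      intro a ha hb
      rw [mem_Ofin, Nat.odd_iff] at hb
      simp only [mem_union, mem_filter, Nat.even_iff, Nat.odd_iff] at ha
      omega
    have hsum2 : (S.filter (fun x => Even x)).sum id + (S.filter (fun x => Odd x ∧ 2*k+1 < x)).sum id + k^2 = n := by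
      rw [← hsum]
      conv_rhs => rw [hdecomp]
      rw [Finset.sum_union hd2, Finset.sum_union hd1, sum_Ofin]
    simp only [mem_filter, mem_product, mem_powerset]
    refine ⟨⟨(Finset.filter_subset _ _).trans hsub, (Finset.filter_subset _ _).trans hsub⟩,
      ?_, ?_, ?_⟩
    · intro x hx
      exact hx.2
    · intro x hx
      exact hx.2
    · have := hsum2; push_cast [← this]; ring
  · -- backward maps into source
    intro p hp
    simp only [mem_filter, mem_product, mem_powerset] at hp
    obtain ⟨⟨hp1, hp2⟩, heven, hodd, hsum⟩ := hp
    have hk2 : p.1.sum id + p.2.sum id + k^2 = n := by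
      have h2 : ((p.1.sum id + p.2.sum id + k^2 : ℕ) : ℤ) = (n : ℤ) := by push_cast at hsum ⊢; linarith
      exact_mod_cast h2
    have hkn : k^2 ≤ n := by omega
    have hOn : Ofin k ⊆ Finset.Icc 1 n := by
      intro x hx
      rw [mem_Ofin, Nat.odd_iff] at hx
      have h2k : 2*k ≤ k^2 + 1 := by nlinarith
      rw [Finset.mem_Icc]; omega
    have hd1 : Disjoint p.1 p.2 := by
      rw [Finset.disjoint_left]
      intro a ha hb
      have := heven a ha; have := (hodd a hb).1
      rw [Nat.even_iff] at *; rw [Nat.odd_iff] at *; omega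
    have hd2 : Disjoint (p.1 ∪ p.2) (Ofin k) := by
      rw [Finset.disjoint_left]
      intro a ha hb
      rw [mem_Ofin, Nat.odd_iff] at hb
      rcases Finset.mem_union.mp ha with h | h
      · have := heven a h; rw [Nat.even_iff] at this; omega
      · have := hodd a h; omega
    simp only [Dpart, mem_filter, mem_powerset]
    refine ⟨⟨?_, ?_⟩, ?_⟩
    · exact Finset.union_subset (Finset.union_subset hp1 hp2) hOn
    · rw [Finset.sum_union hd2, Finset.sum_union hd1, sum_Ofin]; exact hk2
    · rw [pmoex_eq]
      constructor
      · intro hmem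
        rcases Finset.mem_union.mp hmem with h | h
        · rcases Finset.mem_union.mp h with h | h
          · have := heven _ h; rw [Nat.even_iff] at this; omega
          · have := hodd _ h; omega
        · rw [mem_Ofin] at h; omega
      · intro b hb hlt
        exact Finset.mem_union_right _ (mem_Ofin.mpr ⟨hb, hlt⟩)
  · -- left inverse
    intro S hS
    simp only [Dpart, mem_filter, mem_powerset] at hS
    obtain ⟨⟨hsub, hsum⟩, hmo⟩ := hS
    rw [pmoex_eq] at hmo
    obtain ⟨hnot, hall⟩ := hmo
    ext x
    simp only [mem_union, mem_filter, mem_Ofin]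
    constructor
    · rintro ((⟨h, _⟩ | ⟨h, _⟩) | ⟨h1, h2⟩)
      · exact h
      · exact h
      · exact hall x h1 h2
    · intro hx
      have hne : x ≠ 2*k+1 := fun h => hnot (h ▸ hx)
      rcases Nat.even_or_odd x with he | ho
      · exact Or.inl (Or.inl ⟨hx, he⟩)
      · rcases lt_or_gt_of_ne hne with h | h
        · exact Or.inr ⟨ho, h⟩
        · exact Or.inl (Or.inr ⟨hx, ho, h⟩)
  · -- right inverse
    intro p hp
    simp only [mem_filter, mem_product, mem_powerset] at hp
    obtain ⟨⟨hp1, hp2⟩, heven, hodd, hsum⟩ := hp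
    have e1 : (p.1 ∪ p.2 ∪ Ofin k).filter (fun x => Even x) = p.1 := by
      ext x
      simp only [mem_filter, mem_union, mem_Ofin]
      constructor
      · rintro ⟨(h | h) | h, he⟩
        · exact h
        · exact absurd he (Nat.not_even_iff_odd.mpr (hodd x h).1)
        · exact absurd he (Nat.not_even_iff_odd.mpr h.1)
      · intro h; exact ⟨Or.inl (Or.inl h), heven x h⟩
    have e2 : (p.1 ∪ p.2 ∪ Ofin k).filter (fun x => Odd x ∧ 2*k+1 < x) = p.2 := by
      ext x
      simp only [mem_filter, mem_union, mem_Ofin]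
      constructor
      · rintro ⟨(h | h) | h, ho, hlt⟩
        · exact absurd ho (Nat.not_odd_iff_even.mpr (heven x h))
        · exact h
        · omega
      · intro h; exact ⟨Or.inl (Or.inr h), hodd x h⟩
    exact Prod.ext e1 e2
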